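/- Reducedness within the ∗-families: The sets R(BCC_l^{(1)∗_1}) = (R(BCC_l)_s + ℤa) ∪ (R(BCC_l)_m + ℤa) ∪ (R(BC_l)_l + L_{1,1}) and R(C^∨BC_l^{(4)∗_1}) = (R(BC_l)_s + L_{1,1}) ∪ (R(C^∨BC_l)_m + 2ℤa) ∪ (R(C^∨BC_l)_l + 4ℤa) are reduced (for no root α is 2α a root), whereas the four sets R(BCC_l^{(1)∗_0}), R(BCC_l^{(1)∗_{0'}}), R(C^∨BC_l^{(4)∗_0}), R(C^∨BC_l^{(4)∗_{0'}}), obtained by replacing L_{1,1} by L_{0,0} or L_{0,1}, are non-reduced. -/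
import Mathlib


open Pointwise

noncomputable section

/-- The ambient space `F = ℝ^{l+2}`, with coordinates `0,…,l-1` for the finite part
and coordinates `l, l+1` corresponding to the radical vectors `a, b`. -/
abbrev V (l : ℕ) : Type := Fin (l + 2) → ℝ

/-- The orthonormal vectors `ε_i`. -/
def εv (l : ℕ) (i : Fin l) : V l := Pi.single (Fin.castAdd 2 i) 1

/-- The radical vector `a`. -/
def av (l : ℕ) : V l := Pi.single (Fin.natAdd l (0 : Fin 2)) 1

/-- The radical vector `b`. -/
def bv (l : ℕ) : V l := Pi.single (Fin.natAdd l (1 : Fin 2)) 1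

/-- The positive semi-definite symmetric bilinear form `I` of signature `(l,2,0)`,
with radical `ℝa + ℝb`. -/
def Iform (l : ℕ) (x y : V l) : ℝ :=
  ∑ i : Fin l, x (Fin.castAdd 2 i) * y (Fin.castAdd 2 i)

/-- Short roots of the finite root system `BC_l`. -/
def BCs (l : ℕ) : Set (V l) := ⋃ i : Fin l, {εv l i, -εv l i}

/-- Middle-length roots of the finite root system `BC_l`. -/
def BCm (l : ℕ) : Set (V l) :=
  ⋃ (i : Fin l) (j : Fin l) (_ : i ≠ j),
    {εv l i + εv l j, εv l i - εv l j, -εv l i - εv l j}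

/-- Long roots of the finite root system `BC_l`. -/
def BCl (l : ℕ) : Set (V l) := ⋃ i : Fin l, {(2 : ℝ) • εv l i, -((2 : ℝ) • εv l i)}

/-- The finite root system `BC_l`. -/
def BCfull (l : ℕ) : Set (V l) := BCs l ∪ BCm l ∪ BCl l

/-- The subset `(kℤ)v` of `F`. -/
def Zv (l : ℕ) (k : ℤ) (v : V l) : Set (V l) := {x | ∃ n : ℤ, x = ((k * n : ℤ) : ℝ) • v}

/-- The subset `(kℤ)a`. -/
def Za (l : ℕ) (k : ℤ) : Set (V l) := Zv l k (av l)

/-- The subset `(kℤ)b`. -/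
def Zb (l : ℕ) (k : ℤ) : Set (V l) := Zv l k (bv l)

/-- The subset `(1+2ℤ)a`. -/
def oddZa (l : ℕ) : Set (V l) := {x | ∃ n : ℤ, x = ((1 + 2 * n : ℤ) : ℝ) • av l}

/-- The subset `L_{i,j}^{s1,s2} = {s2·m·a + s1·n·b : (m-i)(n-j) ≡ 0 mod 2}`;
`L_{i,j} = Lset l i j 1 1`. -/
def Lset (l : ℕ) (i j s1 s2 : ℤ) : Set (V l) :=
  {x | ∃ m n : ℤ, (2 : ℤ) ∣ ((m - i) * (n - j)) ∧
    x = ((s2 * m : ℤ) : ℝ) • av l + ((s1 * n : ℤ) : ℝ) • bv l}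

/-- The subset `{ma + 2nb : m ≡ n mod 2}` occurring in the ◇-type system. -/
def diaL (l : ℕ) : Set (V l) :=
  {x | ∃ m n : ℤ, (2 : ℤ) ∣ (m - n) ∧ x = ((m : ℤ) : ℝ) • av l + ((2 * n : ℤ) : ℝ) • bv l}

/-- The four types of non-reduced affine root systems. -/
inductive AffType | BCC | CvBC | BBv | CvC

/-- First tier number: the multiplier of `ℤb` on the middle part. -/
def tfm : AffType → ℤ | .BCC => 1 | .CvBC => 2 | .BBv => 1 | .CvC => 2

/-- The multiplier of `ℤb` on the long part. -/
def tfl : AffType → ℤ | .BCC => 1 | .CvBC => 4 | .BBv => 2 | .CvC => 2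

/-- Short part of the affine root system `R(X_l)`. -/
def AffS (l : ℕ) (_X : AffType) : Set (V l) := BCs l + Zb l 1

/-- Middle part of the affine root system `R(X_l)`. -/
def AffM (l : ℕ) (X : AffType) : Set (V l) := BCm l + Zb l (tfm X)

/-- Long part of the affine root system `R(X_l)`. -/
def AffL (l : ℕ) (X : AffType) : Set (V l) := BCl l + Zb l (tfl X)

/-- The affine root system `R(X_l)` for `X ∈ {BCC, C^∨BC, BB^∨, C^∨C}`. -/
def Aff (l : ℕ) (X : AffType) : Set (V l) := AffS l X ∪ AffM l X ∪ AffL l X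

/-- The reduced classical types `BC_l^{(1,2)}, BC_l^{(4,2)}, BC_l^{(2,2)σ}(1), BC_l^{(2,2)σ}(2)`
(for `X = BCC, C^∨BC, BB^∨, C^∨C` respectively). -/
def redClassical (l : ℕ) (X : AffType) : Set (V l) :=
  (AffS l X + Za l 1) ∪ (AffM l X + Za l 1) ∪ (AffL l X + oddZa l)

/-- `R(BC_l^{(1,1)∗})`. -/
def RBC11star (l : ℕ) : Set (V l) :=
  (AffS l .BCC + Za l 1) ∪ (AffM l .BCC + Za l 1) ∪ (BCl l + Lset l 1 1 1 1)

/-- `R(BC_l^{(4,4)∗})`. -/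
def RBC44star (l : ℕ) : Set (V l) :=
  (BCs l + Lset l 1 1 1 1) ∪ (AffM l .CvBC + Za l 2) ∪ (AffL l .CvBC + Za l 4)

/-- `R(X_l^{(1)})`. -/
def E1 (l : ℕ) (X : AffType) : Set (V l) := Aff l X + Za l 1

/-- `R(X_l^{(2)}(i))`. -/
def E2 (l : ℕ) (X : AffType) (i : ℤ) : Set (V l) :=
  (AffS l X + Za l 1) ∪ (AffM l X + Za l i) ∪ (AffL l X + Za l 2)

/-- `R(X_l^{(4)})`. -/
def E4 (l : ℕ) (X : AffType) : Set (V l) :=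
  (AffS l X + Za l 1) ∪ (AffM l X + Za l 2) ∪ (AffL l X + Za l 4)

/-- `R(BCC_l^{(1)∗})`-type systems: `BCC1star l 0 0 = R(BCC_l^{(1)∗_0})`,
`BCC1star l 0 1 = R(BCC_l^{(1)∗_{0'}})`, `BCC1star l 1 1 = R(BCC_l^{(1)∗_1}) = R(BC_l^{(1,1)∗})`. -/
def BCC1star (l : ℕ) (i j : ℤ) : Set (V l) :=
  (AffS l .BCC + Za l 1) ∪ (AffM l .BCC + Za l 1) ∪ (BCl l + Lset l i j 1 1)

/-- `R(BCC_l^{(2)∗_p})`. -/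
def BCC2star (l : ℕ) (p : ℤ) : Set (V l) :=
  (AffS l .BCC + Za l 1) ∪ (AffM l .BCC + Za l 2) ∪ (BCl l + Lset l p p 1 2)

/-- `R(C^∨BC_l^{(2)∗_p})`. -/
def CvBC2star (l : ℕ) (p : ℤ) : Set (V l) :=
  (BCs l + Lset l p p 1 1) ∪ (AffM l .CvBC + Za l 2) ∪ (AffL l .CvBC + Za l 2)

/-- `R(C^∨BC_l^{(4)∗})`-type systems: `CvBC4star l 0 0 = R(C^∨BC_l^{(4)∗_0})`,
`CvBC4star l 0 1 = R(C^∨BC_l^{(4)∗_{0'}})`, `CvBC4star l 1 1 = R(C^∨BC_l^{(4)∗_1}) = R(BC_l^{(4,4)∗})`. -/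
def CvBC4star (l : ℕ) (i j : ℤ) : Set (V l) :=
  (BCs l + Lset l i j 1 1) ∪ (AffM l .CvBC + Za l 2) ∪ (AffL l .CvBC + Za l 4)

/-- `R(BB_2^{∨(2)∗})` (its defining pattern, written for general `l`). -/
def BB2star (l : ℕ) : Set (V l) :=
  (BCs l + Za l 1 + Zb l 1) ∪ (BCm l + Lset l 0 0 1 1) ∪ (BCl l + Za l 2 + Zb l 2)

/-- `R(C^∨C_l^{(1)∗_p})`. -/
def CvC1star (l : ℕ) (p : ℤ) : Set (V l) :=
  (AffS l .CvC + Za l 1) ∪ (AffM l .CvC + Za l 1) ∪ (BCl l + Lset l p p 2 1)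

/-- `R(C^∨C_l^{(2)∗})`-type systems: `CvC2star l 0 0 = R(C^∨C_l^{(2)∗_0})`,
`CvC2star l 1 1 = R(C^∨C_l^{(2)∗_1})`, `CvC2star l 1 0 = R(C^∨C_l^{(2)∗_{1'}})`. -/
def CvC2star (l : ℕ) (i j : ℤ) : Set (V l) :=
  (BCs l + Lset l 0 0 1 1) ∪ (AffM l .CvC + Za l 2) ∪ (BCl l + Lset l i j 2 2)

/-- `R(C^∨C_l^{(2)∗_s})`. -/
def CvC2starS (l : ℕ) : Set (V l) :=
  (BCs l + Lset l 0 0 1 1) ∪ (AffM l .CvC + Za l 2) ∪ (AffL l .CvC + Za l 2)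

/-- `R(C^∨C_l^{(2)∗_l})`. -/
def CvC2starL (l : ℕ) : Set (V l) :=
  (AffS l .CvC + Za l 1) ∪ (AffM l .CvC + Za l 2) ∪ (BCl l + Lset l 0 0 2 2)

/-- `R(C^∨C_l^{(4)∗_p})`. -/
def CvC4star (l : ℕ) (p : ℤ) : Set (V l) :=
  (BCs l + Lset l p p 1 1) ∪ (AffM l .CvC + Za l 2) ∪ (AffL l .CvC + Za l 4)

/-- `R(C^∨C_l^{(2)◇})`. -/
def CvC2dia (l : ℕ) : Set (V l) :=
  (AffS l .CvC + Za l 1) ∪ (AffM l .CvC + Za l 1) ∪ (BCl l + diaL l)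

/-- The reflection `w_α`. -/
def reflV (l : ℕ) (α x : V l) : V l := x - (2 * Iform l x α / Iform l α α) • α

/-- A generalized root system in `(F, I)`; since `I` has signature `(l,2,0)`, this is
exactly an elliptic root system. -/
structure IsERS (l : ℕ) (R : Set (V l)) : Prop where
  /-- `R` is discrete. -/
  discrete : ∀ x ∈ R, ∃ ε > 0, ∀ y ∈ R, ‖x - y‖ < ε → y = x
  /-- The root lattice `Q(R)` is full in `F`. -/
  spans : Submodule.span ℝ R = ⊤
  /-- roots are non-isotropic. -/
  nonisotropic : ∀ α ∈ R, Iform l α α ≠ 0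
  /-- integrality: `2 I(α,β)/I(α,α) ∈ ℤ`. -/
  integral : ∀ α ∈ R, ∀ β ∈ R, ∃ n : ℤ, 2 * Iform l α β = (n : ℝ) * Iform l α α
  /-- each reflection `w_α` maps `R` onto `R`. -/
  reflects : ∀ α ∈ R, reflV l α '' R = R
  /-- irreducibility. -/
  irred : ∀ R1 R2 : Set (V l), R1 ∪ R2 = R →
    (∀ x ∈ R1, ∀ y ∈ R2, Iform l x y = 0) → R1 = ∅ ∨ R2 = ∅

/-- `R` is reduced. -/
def IsReducedRS (l : ℕ) (R : Set (V l)) : Prop := ∀ α ∈ R, (2 : ℝ) • α ∉ R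

/-- `R` is non-reduced. -/
def IsNonReducedRS (l : ℕ) (R : Set (V l)) : Prop := ∃ α ∈ R, (2 : ℝ) • α ∈ R

/-- The radical `ℝa + ℝb` of `I`. -/
def radSpan (l : ℕ) : Submodule ℝ (V l) := Submodule.span ℝ {av l, bv l}

/-- The marking line `G = ℝa`. -/
def Ga (l : ℕ) : Submodule ℝ (V l) := Submodule.span ℝ {av l}

/-- `G` is a marking of `R`: a one-dimensional subspace of `rad(I)` such that
`G ∩ Q(R)` is full in `G`. -/
def IsMarking (l : ℕ) (R : Set (V l)) (G : Submodule ℝ (V l)) : Prop :=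
  G ≤ radSpan l ∧ Module.finrank ℝ G = 1 ∧
    ∃ v : V l, v ≠ 0 ∧ v ∈ G ∧ v ∈ AddSubgroup.closure R

/-- `φ` rescales the form `I` by the factor `c`. -/
def IsSimilarity (l : ℕ) (φ : V l ≃ₗ[ℝ] V l) (c : ℝ) : Prop :=
  ∀ x y : V l, Iform l (φ x) (φ y) = c * Iform l x y

/-- Isomorphism of root systems in `(F, I)`. -/
def IsoRS (l : ℕ) (R R' : Set (V l)) : Prop :=
  ∃ (φ : V l ≃ₗ[ℝ] V l) (c : ℝ), 0 < c ∧ IsSimilarity l φ c ∧ φ '' R = R'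

/-- Isomorphism of marked root systems (with marking `ℝa` on both sides). -/
def IsoRSa (l : ℕ) (R R' : Set (V l)) : Prop :=
  ∃ (φ : V l ≃ₗ[ℝ] V l) (c : ℝ), 0 < c ∧ IsSimilarity l φ c ∧
    φ '' (Ga l : Set (V l)) = (Ga l : Set (V l)) ∧ φ '' R = R'

/-- The quotient `R/G` (image of `R` in `F/G`) is non-reduced. -/
def QuotNonReduced (l : ℕ) (R : Set (V l)) (G : Submodule ℝ (V l)) : Prop :=
  ∃ α ∈ R, ∃ β ∈ R, G.mkQ β = (2 : ℝ) • G.mkQ α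

/-- The quotient `R/G` is isomorphic, as an affine root system, to the affine root system
`X ⊆ span(ε_1,…,ε_l,b)`: encoded via `p = ψ ∘ (F → F/G)` for an isomorphism
`ψ : F/G ≅ span(ε_1,…,ε_l,b)` with `Ī(u,v) = c·I(ψu,ψv)` and `ψ(R/G) = X`. -/
def QuotIsType (l : ℕ) (R : Set (V l)) (G : Submodule ℝ (V l)) (X : Set (V l)) : Prop :=
  ∃ (p : V l →ₗ[ℝ] V l) (c : ℝ), 0 < c ∧
    LinearMap.ker p = G ∧
    LinearMap.range p = Submodule.span ℝ (Set.range (εv l) ∪ {bv l}) ∧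
    (∀ x y : V l, Iform l x y = c * Iform l (p x) (p y)) ∧
    p '' R = X

end


noncomputable section
namespace StarAux

variable {l : ℕ}

lemma eps_cast (i k : Fin l) : εv l i (Fin.castAdd 2 k) = if k = i then 1 else 0 := by
  simp [εv, Pi.single_apply, Fin.ext_iff]

lemma eps_nat (i : Fin l) (k : Fin 2) : εv l i (Fin.natAdd l k) = 0 := by
  simp [εv, Pi.single_apply, Fin.ext_iff]; omega

lemma av_cast (k : Fin l) : av l (Fin.castAdd 2 k) = 0 := by
  simp [av, Pi.single_apply, Fin.ext_iff]; omega

lemma bv_cast (k : Fin l) : bv l (Fin.castAdd 2 k) = 0 := by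
  simp [bv, Pi.single_apply, Fin.ext_iff]; omega

lemma av_nat0 : av l (Fin.natAdd l 0) = 1 := by simp [av]
lemma av_nat1 : av l (Fin.natAdd l 1) = 0 := by
  simp [av, Pi.single_apply, Fin.ext_iff]
lemma bv_nat0 : bv l (Fin.natAdd l 0) = 0 := by
  simp [bv, Pi.single_apply, Fin.ext_iff]
lemma bv_nat1 : bv l (Fin.natAdd l 1) = 1 := by simp [bv]

lemma Iform_rad (x z : V l) (hz : ∀ k : Fin l, z (Fin.castAdd 2 k) = 0) :
    Iform l (x + z) (x + z) = Iform l x x := by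
  simp [Iform, hz]

lemma Iform_eps_self (i : Fin l) : Iform l (εv l i) (εv l i) = 1 := by
  simp [Iform, eps_cast]

lemma Iform_eps_ne {i j : Fin l} (h : i ≠ j) : Iform l (εv l i) (εv l j) = 0 := by
  simp [Iform, eps_cast, ite_mul, Finset.sum_ite_eq']
  exact fun hh => absurd hh.symm h

lemma Iform_neg_neg (x : V l) : Iform l (-x) (-x) = Iform l x x := by
  simp [Iform]

lemma Iform_neg_right (x y : V l) : Iform l x (-y) = - Iform l x y := by
  simp [Iform]

lemma Iform_smul_smul (c : ℝ) (x : V l) : Iform l (c • x) (c • x) = c ^ 2 * Iform l x x := by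
  simp only [Iform, Pi.smul_apply, smul_eq_mul, Finset.mul_sum]
  exact Finset.sum_congr rfl (by intros; ring)

lemma Iform_add_add (x y : V l) :
    Iform l (x + y) (x + y) = Iform l x x + 2 * Iform l x y + Iform l y y := by
  simp only [Iform, Pi.add_apply, Finset.mul_sum, ← Finset.sum_add_distrib]
  exact Finset.sum_congr rfl (by intros; ring)

lemma Iform_sub_sub (x y : V l) :
    Iform l (x - y) (x - y) = Iform l x x - 2 * Iform l x y + Iform l y y := by
  rw [sub_eq_add_neg, Iform_add_add, Iform_neg_neg, Iform_neg_right]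
  ring

lemma norm_BCs {v : V l} (h : v ∈ BCs l) : Iform l v v = 1 := by
  simp only [BCs, Set.mem_iUnion, Set.mem_insert_iff, Set.mem_singleton_iff] at h
  obtain ⟨i, rfl | rfl⟩ := h
  · exact Iform_eps_self i
  · rw [Iform_neg_neg]; exact Iform_eps_self i

lemma norm_BCm {v : V l} (h : v ∈ BCm l) : Iform l v v = 2 := by
  simp only [BCm, Set.mem_iUnion, Set.mem_insert_iff, Set.mem_singleton_iff] at h
  obtain ⟨i, j, hij, rfl | rfl | rfl⟩ := h
  · rw [Iform_add_add, Iform_eps_self, Iform_eps_self, Iform_eps_ne hij]; ring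
  · rw [Iform_sub_sub, Iform_eps_self, Iform_eps_self, Iform_eps_ne hij]; ring
  · have : -εv l i - εv l j = -(εv l i + εv l j) := by ring
    rw [this, Iform_neg_neg, Iform_add_add, Iform_eps_self, Iform_eps_self,
      Iform_eps_ne hij]; ring

lemma norm_BCl {v : V l} (h : v ∈ BCl l) : Iform l v v = 4 := by
  simp only [BCl, Set.mem_iUnion, Set.mem_insert_iff, Set.mem_singleton_iff] at h
  obtain ⟨i, rfl | rfl⟩ := h
  · rw [Iform_smul_smul, Iform_eps_self]; norm_num
  · rw [Iform_neg_neg, Iform_smul_smul, Iform_eps_self]; norm_num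

lemma natAdd_BCs {v : V l} (h : v ∈ BCs l) (k : Fin 2) : v (Fin.natAdd l k) = 0 := by
  simp only [BCs, Set.mem_iUnion, Set.mem_insert_iff, Set.mem_singleton_iff] at h
  obtain ⟨i, rfl | rfl⟩ := h <;> simp [eps_nat]

lemma natAdd_BCl {v : V l} (h : v ∈ BCl l) (k : Fin 2) : v (Fin.natAdd l k) = 0 := by
  simp only [BCl, Set.mem_iUnion, Set.mem_insert_iff, Set.mem_singleton_iff] at h
  obtain ⟨i, rfl | rfl⟩ := h <;> simp [eps_nat]

lemma rad_Za {k : ℤ} : ∀ z ∈ Za l k, ∀ k' : Fin l, z (Fin.castAdd 2 k') = 0 := by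
  rintro z ⟨n, rfl⟩ k'
  simp [av_cast]

lemma rad_Zb {k : ℤ} : ∀ z ∈ Zb l k, ∀ k' : Fin l, z (Fin.castAdd 2 k') = 0 := by
  rintro z ⟨n, rfl⟩ k'
  simp [bv_cast]

lemma rad_Lset {i j s1 s2 : ℤ} :
    ∀ z ∈ Lset l i j s1 s2, ∀ k' : Fin l, z (Fin.castAdd 2 k') = 0 := by
  rintro z ⟨m, n, -, rfl⟩ k'
  simp [av_cast, bv_cast]

lemma norm_add_rad {A L : Set (V l)} {c : ℝ} (hA : ∀ v ∈ A, Iform l v v = c)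
    (hL : ∀ z ∈ L, ∀ k : Fin l, z (Fin.castAdd 2 k) = 0) :
    ∀ x ∈ A + L, Iform l x x = c := by
  rintro x hx
  rw [Set.mem_add] at hx
  obtain ⟨v, hv, z, hz, rfl⟩ := hx
  rw [Iform_rad v z (hL z hz)]
  exact hA v hv

lemma odd_contra {m n : ℤ} (h : (2 : ℤ) ∣ (2 * m - 1) * (2 * n - 1)) : False := by
  have ho : Odd ((2 * m - 1) * (2 * n - 1)) := Odd.mul ⟨m - 1, by ring⟩ ⟨n - 1, by ring⟩
  exact (Int.not_odd_iff_even.mpr (even_iff_two_dvd.mpr h)) ho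

/-- Reducedness of `BCC1star l 1 1`. -/
lemma red1 : IsReducedRS l (BCC1star l 1 1) := by
  have nS : ∀ x ∈ AffS l .BCC + Za l 1, Iform l x x = 1 :=
    norm_add_rad (norm_add_rad (fun v hv => norm_BCs hv) rad_Zb) rad_Za
  have nM : ∀ x ∈ AffM l .BCC + Za l 1, Iform l x x = 2 :=
    norm_add_rad (norm_add_rad (fun v hv => norm_BCm hv) rad_Zb) rad_Za
  have nL : ∀ x ∈ BCl l + Lset l 1 1 1 1, Iform l x x = 4 :=
    norm_add_rad (fun v hv => norm_BCl hv) rad_Lset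
  intro α hα h2α
  have hv1 : Iform l α α = 1 := by
    rcases hα with (h | h) | h
    · exact nS α h
    · exfalso
      have := nM α h
      rcases h2α with (h2 | h2) | h2
      · have := nS _ h2; rw [Iform_smul_smul] at this; linarith
      · have := nM _ h2; rw [Iform_smul_smul] at this; linarith
      · have := nL _ h2; rw [Iform_smul_smul] at this; linarith
    · exfalso
      have := nL α h
      rcases h2α with (h2 | h2) | h2
      · have := nS _ h2; rw [Iform_smul_smul] at this; linarith
      · have := nM _ h2; rw [Iform_smul_smul] at this; linarith
      · have := nL _ h2; rw [Iform_smul_smul] at this; linarith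
  -- α is in the short part
  have hαS : α ∈ AffS l .BCC + Za l 1 := by
    rcases hα with (h | h) | h
    · exact h
    · have := nM α h; rw [hv1] at this; norm_num at this
    · have := nL α h; rw [hv1] at this; norm_num at this
  -- 2α is in the long part
  have h2L : (2 : ℝ) • α ∈ BCl l + Lset l 1 1 1 1 := by
    rcases h2α with (h2 | h2) | h2
    · have := nS _ h2; rw [Iform_smul_smul, hv1] at this; norm_num at this
    · have := nM _ h2; rw [Iform_smul_smul, hv1] at this; norm_num at this
    · exact h2
  rw [Set.mem_add] at hαS
  obtain ⟨y, hy, z2, hz2, hsum⟩ := hαS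
  rw [AffS, Set.mem_add] at hy
  obtain ⟨v, hv, z1, hz1, rfl⟩ := hy
  obtain ⟨n, rfl⟩ := hz1
  obtain ⟨m, rfl⟩ := hz2
  rw [Set.mem_add] at h2L
  obtain ⟨w, hw, z, hz, hsum2⟩ := h2L
  obtain ⟨m', n', hpar, rfl⟩ := hz
  have e0 := congrFun hsum2 (Fin.natAdd l 0)
  have e1 := congrFun hsum2 (Fin.natAdd l 1)
  rw [← hsum] at e0 e1
  simp only [Pi.add_apply, Pi.smul_apply, smul_eq_mul, av_nat0, av_nat1, bv_nat0, bv_nat1,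
    natAdd_BCs hv, natAdd_BCl hw] at e0 e1
  push_cast at e0 e1
  have hmr : (m' : ℝ) = 2 * (m : ℝ) := by linarith
  have hnr : (n' : ℝ) = 2 * (n : ℝ) := by linarith
  have hm : m' = 2 * m := by exact_mod_cast hmr
  have hn : n' = 2 * n := by exact_mod_cast hnr
  rw [hm, hn] at hpar
  exact odd_contra hpar

/-- Reducedness of `CvBC4star l 1 1`. -/
lemma red2 : IsReducedRS l (CvBC4star l 1 1) := by
  have nS : ∀ x ∈ BCs l + Lset l 1 1 1 1, Iform l x x = 1 :=
    norm_add_rad (fun v hv => norm_BCs hv) rad_Lset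
  have nM : ∀ x ∈ AffM l .CvBC + Za l 2, Iform l x x = 2 :=
    norm_add_rad (norm_add_rad (fun v hv => norm_BCm hv) rad_Zb) rad_Za
  have nL : ∀ x ∈ AffL l .CvBC + Za l 4, Iform l x x = 4 :=
    norm_add_rad (norm_add_rad (fun v hv => norm_BCl hv) rad_Zb) rad_Za
  intro α hα h2α
  have hv1 : Iform l α α = 1 := by
    rcases hα with (h | h) | h
    · exact nS α h
    · exfalso
      have := nM α h
      rcases h2α with (h2 | h2) | h2
      · have := nS _ h2; rw [Iform_smul_smul] at this; linarith
      · have := nM _ h2; rw [Iform_smul_smul] at this; linarith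
      · have := nL _ h2; rw [Iform_smul_smul] at this; linarith
    · exfalso
      have := nL α h
      rcases h2α with (h2 | h2) | h2
      · have := nS _ h2; rw [Iform_smul_smul] at this; linarith
      · have := nM _ h2; rw [Iform_smul_smul] at this; linarith
      · have := nL _ h2; rw [Iform_smul_smul] at this; linarith
  have hαS : α ∈ BCs l + Lset l 1 1 1 1 := by
    rcases hα with (h | h) | h
    · exact h
    · have := nM α h; rw [hv1] at this; norm_num at this
    · have := nL α h; rw [hv1] at this; norm_num at this
  have h2L : (2 : ℝ) • α ∈ AffL l .CvBC + Za l 4 := by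
    rcases h2α with (h2 | h2) | h2
    · have := nS _ h2; rw [Iform_smul_smul, hv1] at this; norm_num at this
    · have := nM _ h2; rw [Iform_smul_smul, hv1] at this; norm_num at this
    · exact h2
  rw [Set.mem_add] at hαS
  obtain ⟨v, hv, z, hz, hsum⟩ := hαS
  obtain ⟨m, n, hpar, rfl⟩ := hz
  rw [Set.mem_add] at h2L
  obtain ⟨y, hy, z2, hz2, hsum2⟩ := h2L
  rw [AffL, Set.mem_add] at hy
  obtain ⟨w, hw, z1, hz1, rfl⟩ := hy
  obtain ⟨n', rfl⟩ := hz1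
  obtain ⟨m', rfl⟩ := hz2
  have e0 := congrFun hsum2 (Fin.natAdd l 0)
  have e1 := congrFun hsum2 (Fin.natAdd l 1)
  rw [← hsum] at e0 e1
  simp only [Pi.add_apply, Pi.smul_apply, smul_eq_mul, av_nat0, av_nat1, bv_nat0, bv_nat1,
    natAdd_BCs hv, natAdd_BCl hw, tfl] at e0 e1
  push_cast at e0 e1
  have hmr : (m : ℝ) = 2 * (m' : ℝ) := by linarith
  have hnr : (n : ℝ) = 2 * (n' : ℝ) := by linarith
  have hm : m = 2 * m' := by exact_mod_cast hmr
  have hn : n = 2 * n' := by exact_mod_cast hnr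
  rw [hm, hn] at hpar
  exact odd_contra hpar

lemma zero_mem_Za (k : ℤ) : (0 : V l) ∈ Za l k := ⟨0, by simp⟩
lemma zero_mem_Zb (k : ℤ) : (0 : V l) ∈ Zb l k := ⟨0, by simp⟩

lemma zero_mem_Lset (i j : ℤ) (hij : i = 0 ∨ j = 0) : (0 : V l) ∈ Lset l i j 1 1 := by
  refine ⟨0, 0, ?_, by simp⟩
  rcases hij with rfl | rfl <;> simp

lemma eps_mem_BCs (i : Fin l) : εv l i ∈ BCs l := by
  simp only [BCs, Set.mem_iUnion, Set.mem_insert_iff, Set.mem_singleton_iff]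
  exact ⟨i, Or.inl rfl⟩

lemma two_eps_mem_BCl (i : Fin l) : (2 : ℝ) • εv l i ∈ BCl l := by
  simp only [BCl, Set.mem_iUnion, Set.mem_insert_iff, Set.mem_singleton_iff]
  exact ⟨i, Or.inl rfl⟩

lemma nonred1 (hl : 1 ≤ l) (j : ℤ) (_hj : j = 0 ∨ j = 1) :
    IsNonReducedRS l (BCC1star l 0 j) := by
  refine ⟨εv l ⟨0, hl⟩, ?_, ?_⟩
  · left; left
    rw [Set.mem_add]
    refine ⟨εv l ⟨0, hl⟩, ?_, 0, zero_mem_Za 1, by simp⟩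
    rw [AffS, Set.mem_add]
    exact ⟨εv l ⟨0, hl⟩, eps_mem_BCs _, 0, zero_mem_Zb 1, by simp⟩
  · right
    rw [Set.mem_add]
    refine ⟨(2 : ℝ) • εv l ⟨0, hl⟩, two_eps_mem_BCl _, 0, ?_, by simp⟩
    exact zero_mem_Lset 0 j (Or.inl rfl)

lemma nonred2 (hl : 1 ≤ l) (j : ℤ) (_hj : j = 0 ∨ j = 1) :
    IsNonReducedRS l (CvBC4star l 0 j) := by
  refine ⟨εv l ⟨0, hl⟩, ?_, ?_⟩
  · left; left
    rw [Set.mem_add]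
    exact ⟨εv l ⟨0, hl⟩, eps_mem_BCs _, 0, zero_mem_Lset 0 j (Or.inl rfl), by simp⟩
  · right
    rw [Set.mem_add]
    refine ⟨(2 : ℝ) • εv l ⟨0, hl⟩, ?_, 0, zero_mem_Za 4, by simp⟩
    rw [AffL, Set.mem_add]
    exact ⟨(2 : ℝ) • εv l ⟨0, hl⟩, two_eps_mem_BCl _, 0, zero_mem_Zb _, by simp⟩

end StarAux
end

noncomputable section

/-- **Reducedness within the ∗-families**: `BCC_l^{(1)∗_1}` and `C^∨BC_l^{(4)∗_1}` are
reduced, whereas `BCC_l^{(1)∗_0}, BCC_l^{(1)∗_{0'}}, C^∨BC_l^{(4)∗_0}, C^∨BC_l^{(4)∗_{0'}}`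
are non-reduced. -/
theorem reducedness_in_star_families {l : ℕ} (hl : 1 ≤ l) :
    IsReducedRS l (BCC1star l 1 1) ∧
    IsReducedRS l (CvBC4star l 1 1) ∧
    IsNonReducedRS l (BCC1star l 0 0) ∧
    IsNonReducedRS l (BCC1star l 0 1) ∧
    IsNonReducedRS l (CvBC4star l 0 0) ∧
    IsNonReducedRS l (CvBC4star l 0 1) := by
  exact ⟨StarAux.red1, StarAux.red2, StarAux.nonred1 hl 0 (Or.inl rfl),
    StarAux.nonred1 hl 1 (Or.inr rfl), StarAux.nonred2 hl 0 (Or.inl rfl),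
    StarAux.nonred2 hl 1 (Or.inr rfl)⟩

end
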